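/- The weak order on involutions I_n, defined as the transitive closure of τ → m(s_i)·τ for τ ≠ m(s_i)·τ, has the identity as unique minimal element and the longest permutation w_0 as unique maximal element; moreover, from any involution τ ≠ w_0 there exists i with m(s_i)·τ ≠ τ, and the involution length of m(s_i)·τ is ℓ̂(τ) + 1 whenever m(s_i)·τ ≠ τ. -/

import Mathlib

open Finset

/-- The number of inversions (the length) of a permutation. -/
def invCount {n : ℕ} (w : Equiv.Perm (Fin n)) : ℕ :=
  (Finset.univ.filter fun p : Fin n × Fin n => p.1 < p.2 ∧ w p.2 < w p.1).card

/-- The longest permutation `w_0`. -/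
def w0 (n : ℕ) : Equiv.Perm (Fin n) := Fin.revPerm

/-- The Richardson–Springer monoid action of the generator `m(s_i)` on involutions:
`m(s_i)·τ = τ` if `τ(i+1) < τ(i)`; `m(s_i)·τ = s_i τ` if `τ` fixes both `i` and `i+1`;
and `m(s_i)·τ = s_i τ s_i` otherwise. -/
def mAct {n : ℕ} (i : Fin n) (τ : Equiv.Perm (Fin n)) : Equiv.Perm (Fin n) :=
  if h : i.val + 1 < n then
    let j : Fin n := ⟨i.val + 1, h⟩
    let s := Equiv.swap i j
    if τ j < τ i then τ
    else if τ i = i ∧ τ j = j then s * τ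
    else s * τ * s
  else τ

/-- The involution diagram `D̂(τ)`. -/
def invDiagram (n : ℕ) (τ : Equiv.Perm (Fin n)) : Finset (Fin n × Fin n) :=
  Finset.univ.filter fun p => p.2 < τ p.1 ∧ p.1 < τ p.2 ∧ p.1 ≤ p.2

/-- The involution length `ℓ̂(τ) = #D̂(τ)`. -/
def invLen {n : ℕ} (τ : Equiv.Perm (Fin n)) : ℕ := (invDiagram n τ).card

/-- `applyM [i_1, …, i_k] τ = m(s_{i_1}) ⋯ m(s_{i_k}) · τ`. -/
def applyM {n : ℕ} (L : List (Fin n)) (τ : Equiv.Perm (Fin n)) : Equiv.Perm (Fin n) :=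
  L.foldr mAct τ

namespace WOI
variable {n : ℕ}

theorem swap_lt {i j : Fin n} (hij : (i:ℕ)+1 = (j:ℕ)) (x y : Fin n) :
    Equiv.swap i j x < Equiv.swap i j y ↔ (x < y ∧ ¬(x = i ∧ y = j)) ∨ (x = j ∧ y = i) := by
  simp only [Equiv.swap_apply_def]
  split_ifs <;> simp only [Fin.lt_def, Fin.ext_iff] at * <;> omega

theorem apply_apply {τ : Equiv.Perm (Fin n)} (hτ : τ * τ = 1) (x : Fin n) : τ (τ x) = x := by
  have := congrArg (fun g : Equiv.Perm (Fin n) => g x) hτ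
  simpa using this

theorem lt_of_hij {i j : Fin n} (hij : (i:ℕ)+1 = (j:ℕ)) : i < j := by
  simp only [Fin.lt_def]; omega

theorem invCount_swap_mul {τ : Equiv.Perm (Fin n)} (hτ : τ * τ = 1) {i j : Fin n}
    (hij : (i:ℕ)+1 = (j:ℕ)) (hlt : τ i < τ j) :
    invCount (Equiv.swap i j * τ) = invCount τ + 1 := by
  set s := Equiv.swap i j with hs
  have key : (univ.filter fun p : Fin n × Fin n => p.1 < p.2 ∧ (s * τ) p.2 < (s * τ) p.1)
      = insert (τ i, τ j) (univ.filter fun p : Fin n × Fin n => p.1 < p.2 ∧ τ p.2 < τ p.1) := by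
    ext ⟨a, b⟩
    simp only [mem_filter, mem_insert, mem_univ, true_and, Equiv.Perm.mul_apply, Prod.mk.injEq, hs]
    rw [swap_lt hij]
    constructor
    · rintro ⟨hab, ⟨h1, _⟩ | ⟨h1, h2⟩⟩
      · exact Or.inr ⟨hab, h1⟩
      · refine Or.inl ⟨?_, ?_⟩
        · rw [← h2, apply_apply hτ]
        · rw [← h1, apply_apply hτ]
    · rintro (⟨ha, hb⟩ | ⟨hab, h⟩)
      · subst ha; subst hb
        exact ⟨hlt, Or.inr ⟨apply_apply hτ j, apply_apply hτ i⟩⟩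
      · refine ⟨hab, Or.inl ⟨h, ?_⟩⟩
        rintro ⟨h1, h2⟩
        have hb : b = τ i := by rw [← h1, apply_apply hτ]
        have ha : a = τ j := by rw [← h2, apply_apply hτ]
        rw [ha, hb] at hab
        exact absurd hab (not_lt.2 hlt.le)
  show _ = _
  rw [invCount, invCount, key, card_insert_of_notMem]
  simp only [mem_filter, not_and]
  intro _ _
  simp only [apply_apply hτ]
  exact not_lt.2 (lt_of_hij hij).le

theorem invCount_mul_swap {w : Equiv.Perm (Fin n)} {i j : Fin n}
    (hij : (i:ℕ)+1 = (j:ℕ)) (hlt : w i < w j) :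
    invCount (w * Equiv.swap i j) = invCount w + 1 := by
  set s := Equiv.swap i j with hs
  have hss : ∀ x, s (s x) = x := fun x => Equiv.swap_apply_self i j x
  have key : (univ.filter fun p : Fin n × Fin n => p.1 < p.2 ∧ (w * s) p.2 < (w * s) p.1)
      = insert (i, j) ((univ.filter fun p : Fin n × Fin n => p.1 < p.2 ∧ w p.2 < w p.1).image
          fun p => (s p.1, s p.2)) := by
    ext ⟨a, b⟩
    simp only [mem_filter, mem_insert, mem_image, mem_univ, true_and,
      Prod.mk.injEq, Prod.exists]
    simp only [Equiv.Perm.mul_apply]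
    constructor
    · rintro ⟨hab, hw⟩
      by_cases hx : a = i ∧ b = j
      · exact Or.inl hx
      · refine Or.inr ⟨s a, s b, ⟨(swap_lt hij a b).2 (Or.inl ⟨hab, hx⟩), ?_⟩, hss a, hss b⟩
        exact hw
    · rintro (⟨ha, hb⟩ | ⟨c, d, ⟨hcd, hw⟩, hc, hd⟩)
      · subst ha; subst hb
        refine ⟨lt_of_hij hij, ?_⟩
        rwa [hs, Equiv.swap_apply_right, Equiv.swap_apply_left]
      · subst hc; subst hd
        rw [hss, hss]
        refine ⟨?_, hw⟩
        rw [swap_lt hij]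
        refine Or.inl ⟨hcd, ?_⟩
        rintro ⟨h1, h2⟩
        subst h1; subst h2
        exact absurd hw (not_lt.2 hlt.le)
  show _ = _
  rw [invCount, invCount, key, card_insert_of_notMem, Finset.card_image_of_injective]
  · intro p q h
    simp only [Prod.mk.injEq] at h
    exact Prod.ext ((Equiv.injective s) h.1) ((Equiv.injective s) h.2)
  · intro hmem
    rw [mem_image] at hmem
    obtain ⟨p, hp, hpe⟩ := hmem
    rw [mem_filter] at hp
    have h1 : s p.1 = i := congrArg Prod.fst hpe
    have h2 : s p.2 = j := congrArg Prod.snd hpe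
    have hc : p.1 = j := by rw [← hss p.1, h1, hs, Equiv.swap_apply_left]
    have hd : p.2 = i := by rw [← hss p.2, h2, hs, Equiv.swap_apply_right]
    rw [hc, hd] at hp
    exact absurd hp.2.1 (not_lt.2 (lt_of_hij hij).le)

def excSet {n : ℕ} (τ : Equiv.Perm (Fin n)) : Finset (Fin n) :=
  Finset.univ.filter fun a => a < τ a

def fixSet {n : ℕ} (τ : Equiv.Perm (Fin n)) : Finset (Fin n) :=
  Finset.univ.filter fun a => τ a = a

theorem two_exc_add_fix {τ : Equiv.Perm (Fin n)} (hτ : τ * τ = 1) :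
    2 * (excSet τ).card + (fixSet τ).card = n := by
  classical
  have h1 := Finset.card_filter_add_card_filter_not
    (s := (univ : Finset (Fin n))) (p := fun a => a < τ a)
  have h2 := Finset.card_filter_add_card_filter_not
    (s := (univ.filter fun a : Fin n => ¬ a < τ a)) (p := fun a => τ a = a)
  rw [Finset.filter_filter, Finset.filter_filter] at h2
  have hE : (univ.filter fun a : Fin n => ¬ a < τ a ∧ τ a = a) = fixSet τ := by
    ext a; simp only [fixSet, mem_filter, mem_univ, true_and, and_iff_right_iff_imp]
    intro h; rw [h]; exact lt_irrefl a
  have hG : (univ.filter fun a : Fin n => ¬ a < τ a ∧ ¬ τ a = a).card = (excSet τ).card := by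
    apply Finset.card_bij (fun a _ => τ a)
    · intro a ha
      simp only [mem_filter, mem_univ, true_and] at ha
      simp only [excSet, mem_filter, mem_univ, true_and, apply_apply hτ]
      rcases lt_or_eq_of_le (not_lt.1 ha.1) with h | h
      · exact h
      · exact absurd h ha.2
    · intro a _ b _ h; exact τ.injective h
    · intro b hb
      simp only [excSet, mem_filter, mem_univ, true_and] at hb
      refine ⟨τ b, ?_, apply_apply hτ b⟩
      simp only [mem_filter, mem_univ, true_and, apply_apply hτ, not_lt]
      exact ⟨hb.le, ne_of_lt hb⟩
  rw [hE, hG] at h2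
  have hn : (univ : Finset (Fin n)).card = n := by simp
  have hA : (Finset.filter (fun a => a < τ a) Finset.univ).card = (excSet τ).card := rfl
  omega

theorem two_mul_invLen {τ : Equiv.Perm (Fin n)} (hτ : τ * τ = 1) :
    2 * invLen τ = invCount τ + (excSet τ).card := by
  classical
  have hdiag := Finset.card_filter_add_card_filter_not
    (s := invDiagram n τ) (p := fun p => p.1 = p.2)
  -- diagonal part = excSet
  have hDd : ((invDiagram n τ).filter fun p => p.1 = p.2).card = (excSet τ).card := by
    apply Finset.card_bij (fun p _ => p.1)
    · intro p hp
      simp only [invDiagram, mem_filter, mem_univ, true_and] at hp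
      obtain ⟨⟨h1, h2, h3⟩, h4⟩ := hp
      simp only [excSet, mem_filter, mem_univ, true_and]
      rw [h4] at h2 ⊢; exact h2
    · intro p hp q hq h
      simp only [invDiagram, mem_filter] at hp hq
      exact Prod.ext h (by rw [← hp.2, ← hq.2, h])
    · intro a ha
      simp only [excSet, mem_filter, mem_univ, true_and] at ha
      refine ⟨(a, a), ?_, rfl⟩
      simp only [invDiagram, mem_filter, mem_univ, true_and]
      exact ⟨⟨ha, ha, le_refl a⟩, trivial⟩
  -- off-diagonal part = J1
  have hDo : ((invDiagram n τ).filter fun p => ¬ p.1 = p.2).card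
      = (univ.filter fun p : Fin n × Fin n => p.1 < p.2 ∧ τ p.2 < τ p.1 ∧ p.1 < τ p.2).card := by
    apply Finset.card_bij (fun p _ => (p.1, τ p.2))
    · intro p hp
      simp only [invDiagram, mem_filter, mem_univ, true_and] at hp
      obtain ⟨⟨h1, h2, h3⟩, h4⟩ := hp
      simp only [mem_filter, mem_univ, true_and, apply_apply hτ]
      exact ⟨h2, h1, lt_of_le_of_ne h3 h4⟩
    · intro p hp q hq h
      simp only [Prod.mk.injEq] at h
      exact Prod.ext h.1 (τ.injective h.2)
    · intro b hb
      simp only [mem_filter, mem_univ, true_and] at hb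
      obtain ⟨h1, h2, h3⟩ := hb
      refine ⟨(b.1, τ b.2), ?_, by simp [apply_apply hτ]⟩
      simp only [invDiagram, mem_filter, mem_univ, true_and, apply_apply hτ]
      refine ⟨⟨h2, h1, h3.le⟩, fun h => ?_⟩
      rw [← h] at h3; exact absurd h3 (lt_irrefl b.1)
  -- split inversion set
  have hJ := Finset.card_filter_add_card_filter_not
    (s := univ.filter fun p : Fin n × Fin n => p.1 < p.2 ∧ τ p.2 < τ p.1)
    (p := fun p => p.1 < τ p.2)
  rw [Finset.filter_filter, Finset.filter_filter] at hJ
  have hJa : (univ.filter fun p : Fin n × Fin n => (p.1 < p.2 ∧ τ p.2 < τ p.1) ∧ p.1 < τ p.2)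
      = univ.filter fun p : Fin n × Fin n => p.1 < p.2 ∧ τ p.2 < τ p.1 ∧ p.1 < τ p.2 := by
    ext p; simp only [mem_filter]; tauto
  have hJrest := Finset.card_filter_add_card_filter_not
    (s := univ.filter fun p : Fin n × Fin n => (p.1 < p.2 ∧ τ p.2 < τ p.1) ∧ ¬ p.1 < τ p.2)
    (p := fun p => p.1 = τ p.2)
  rw [Finset.filter_filter, Finset.filter_filter] at hJrest
  have hJ2 : (univ.filter fun p : Fin n × Fin n =>
      ((p.1 < p.2 ∧ τ p.2 < τ p.1) ∧ ¬ p.1 < τ p.2) ∧ p.1 = τ p.2).card = (excSet τ).card := by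
    apply Finset.card_bij (fun p _ => p.1)
    · intro p hp
      simp only [mem_filter, mem_univ, true_and] at hp
      obtain ⟨⟨⟨h1, h2⟩, h3⟩, h4⟩ := hp
      simp only [excSet, mem_filter, mem_univ, true_and]
      have : τ p.1 = p.2 := by rw [h4, apply_apply hτ]
      rw [this]; exact h1
    · intro p hp q hq h
      simp only [mem_filter, mem_univ, true_and] at hp hq
      refine Prod.ext h ?_
      have := hp.2; have h2 := hq.2
      apply τ.injective
      rw [← apply_apply hτ p.2, ← this, ← apply_apply hτ q.2, ← h2, h]
    · intro a ha
      simp only [excSet, mem_filter, mem_univ, true_and] at ha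
      refine ⟨(a, τ a), ?_, rfl⟩
      simp only [mem_filter, mem_univ, true_and, apply_apply hτ]
      exact ⟨⟨⟨ha, ha⟩, lt_irrefl a⟩, trivial⟩
  have hJ3 : (univ.filter fun p : Fin n × Fin n =>
      ((p.1 < p.2 ∧ τ p.2 < τ p.1) ∧ ¬ p.1 < τ p.2) ∧ ¬ p.1 = τ p.2).card
      = (univ.filter fun p : Fin n × Fin n => p.1 < p.2 ∧ τ p.2 < τ p.1 ∧ p.1 < τ p.2).card := by
    apply Finset.card_bij (fun p _ => (τ p.2, τ p.1))
    · intro p hp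
      simp only [mem_filter, mem_univ, true_and, apply_apply hτ] at hp ⊢
      obtain ⟨⟨⟨h1, h2⟩, h3⟩, h4⟩ := hp
      exact ⟨h2, h1, lt_of_le_of_ne (not_lt.1 h3) (fun h => h4 h.symm)⟩
    · intro p hp q hq h
      simp only [Prod.mk.injEq] at h
      exact Prod.ext (τ.injective h.2) (τ.injective h.1)
    · intro b hb
      simp only [mem_filter, mem_univ, true_and] at hb
      obtain ⟨h1, h2, h3⟩ := hb
      refine ⟨(τ b.2, τ b.1), ?_, by simp [apply_apply hτ]⟩
      simp only [mem_filter, mem_univ, true_and, apply_apply hτ]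
      exact ⟨⟨⟨h2, h1⟩, not_lt.2 h3.le⟩, fun h => absurd (h ▸ h3) (lt_irrefl (τ b.2))⟩
  rw [hJa] at hJ
  rw [hJ2, hJ3] at hJrest
  rw [hDd, hDo] at hdiag
  have hL : invLen τ = (invDiagram n τ).card := rfl
  have hC : invCount τ
      = (univ.filter fun p : Fin n × Fin n => p.1 < p.2 ∧ τ p.2 < τ p.1).card := rfl
  omega

theorem mAct_pos (i : Fin n) (τ : Equiv.Perm (Fin n)) (h : i.val + 1 < n) :
    mAct i τ = (if τ ⟨i.val+1,h⟩ < τ i then τ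
      else if τ i = i ∧ τ ⟨i.val+1,h⟩ = ⟨i.val+1,h⟩ then Equiv.swap i ⟨i.val+1,h⟩ * τ
      else Equiv.swap i ⟨i.val+1,h⟩ * τ * Equiv.swap i ⟨i.val+1,h⟩) := by
  simp only [mAct, dif_pos h]

theorem exc_swap_mul {τ : Equiv.Perm (Fin n)} (hτ : τ * τ = 1) {i j : Fin n}
    (hij : (i:ℕ)+1 = (j:ℕ)) (hi : τ i = i) (hj : τ j = j) :
    (excSet (Equiv.swap i j * τ)).card = (excSet τ).card + 1 := by
  have hne : i ≠ j := fun h => by rw [h] at hij; omega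
  have hset : excSet (Equiv.swap i j * τ) = insert i (excSet τ) := by
    ext a
    simp only [excSet, mem_insert, mem_filter, mem_univ, true_and]
    simp only [Equiv.Perm.mul_apply]
    by_cases hai : a = i
    · subst hai
      simp only [hi, Equiv.swap_apply_left, true_or, iff_true]
      exact lt_of_hij hij
    · by_cases haj : a = j
      · subst haj
        simp only [hj, Equiv.swap_apply_right]
        constructor
        · intro hlt; exact absurd hlt (not_lt.2 (lt_of_hij hij).le)
        · rintro (h | h)
          · exact absurd h (Ne.symm hne)
          · exact absurd h (lt_irrefl a)
      · have h1 : τ a ≠ i := fun h => hai (by rw [← apply_apply hτ a, h, hi])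
        have h2 : τ a ≠ j := fun h => haj (by rw [← apply_apply hτ a, h, hj])
        rw [Equiv.swap_apply_of_ne_of_ne h1 h2]
        constructor
        · exact fun h => Or.inr h
        · rintro (h | h)
          · exact absurd h hai
          · exact h
  rw [hset, card_insert_of_notMem]
  simp only [excSet, mem_filter, mem_univ, true_and, hi]
  exact lt_irrefl i

theorem fix_card_conj (τ s : Equiv.Perm (Fin n)) (hss : s * s = 1) :
    (fixSet (s * τ * s)).card = (fixSet τ).card := by
  apply Finset.card_bij (fun a _ => s a)
  · intro a ha
    simp only [fixSet, mem_filter, mem_univ, true_and] at ha ⊢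
    simp only [Equiv.Perm.mul_apply] at ha ⊢
    have := congrArg s ha
    rwa [apply_apply hss] at this
  · intro a _ b _ h; exact s.injective h
  · intro b hb
    simp only [fixSet, mem_filter, mem_univ, true_and] at hb
    refine ⟨s b, ?_, apply_apply hss b⟩
    simp only [fixSet, mem_filter, mem_univ, true_and]
    simp only [Equiv.Perm.mul_apply,
      apply_apply hss, hb]
  
theorem inv_swap_mul {τ : Equiv.Perm (Fin n)} (hτ : τ * τ = 1) {i j : Fin n}
    (hsw : Equiv.swap (τ i) (τ j) = Equiv.swap i j) :
    (Equiv.swap i j * τ) * (Equiv.swap i j * τ) = 1 := by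
  have hst : τ * Equiv.swap i j * τ⁻¹ = Equiv.swap i j := by
    rw [← Equiv.swap_apply_apply]; exact hsw
  have hcomm : τ * Equiv.swap i j = Equiv.swap i j * τ := by
    calc τ * Equiv.swap i j = (τ * Equiv.swap i j * τ⁻¹) * τ := by group
    _ = Equiv.swap i j * τ := by rw [hst]
  calc (Equiv.swap i j * τ) * (Equiv.swap i j * τ)
      = Equiv.swap i j * (τ * Equiv.swap i j) * τ := by group
    _ = Equiv.swap i j * (Equiv.swap i j * τ) * τ := by rw [hcomm]
    _ = (Equiv.swap i j * Equiv.swap i j) * (τ * τ) := by group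
    _ = 1 := by rw [Equiv.swap_mul_self, hτ, one_mul]

theorem inv_conj {τ s : Equiv.Perm (Fin n)} (hτ : τ * τ = 1) (hss : s * s = 1) :
    (s * τ * s) * (s * τ * s) = 1 := by
  calc (s * τ * s) * (s * τ * s) = s * τ * (s * s) * τ * s := by group
    _ = s * (τ * τ) * s := by rw [hss]; group
    _ = s * s := by rw [hτ]; group
    _ = 1 := hss

theorem mAct_step {τ : Equiv.Perm (Fin n)} (hτ : τ * τ = 1) (i : Fin n) (h : i.val + 1 < n)
    (hne : mAct i τ ≠ τ) :
    invLen (mAct i τ) = invLen τ + 1 ∧ (mAct i τ) * (mAct i τ) = 1 := by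
  rw [mAct_pos i τ h] at hne ⊢
  have hij : (i:ℕ)+1 = ((⟨i.val+1,h⟩ : Fin n):ℕ) := rfl
  set j : Fin n := ⟨i.val+1, h⟩
  by_cases hd : τ j < τ i
  · rw [if_pos hd] at hne; exact absurd rfl hne
  · rw [if_neg hd] at hne ⊢
    have hnij : τ i ≠ τ j := fun h' => (lt_of_hij hij).ne (τ.injective h')
    have hlt : τ i < τ j := lt_of_le_of_ne (not_lt.1 hd) hnij
    by_cases hf : τ i = i ∧ τ j = j
    · rw [if_pos hf] at hne ⊢
      have hinv := inv_swap_mul hτ (i := i) (j := j) (by rw [hf.1, hf.2])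
      have hexc := exc_swap_mul hτ hij hf.1 hf.2
      have hinvc := invCount_swap_mul hτ hij hlt
      have h2 := two_mul_invLen hτ
      have h3 := two_mul_invLen hinv
      exact ⟨by omega, hinv⟩
    · rw [if_neg hf] at hne ⊢
      have hss : Equiv.swap i j * Equiv.swap i j = 1 := Equiv.swap_mul_self i j
      have hinv := inv_conj (s := Equiv.swap i j) hτ hss
      have hfix := fix_card_conj τ (Equiv.swap i j) hss
      have hexc : (excSet (Equiv.swap i j * τ * Equiv.swap i j)).card = (excSet τ).card := by
        have e1 := two_exc_add_fix hτ
        have e2 := two_exc_add_fix hinv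
        omega
      have hw : (Equiv.swap i j * τ) i < (Equiv.swap i j * τ) j := by
        simp only [Equiv.Perm.mul_apply]
        rw [swap_lt hij]
        exact Or.inl ⟨hlt, hf⟩
      have hc1 := invCount_swap_mul hτ hij hlt
      have hc2 := invCount_mul_swap (w := Equiv.swap i j * τ) hij hw
      have h2 := two_mul_invLen hτ
      have h3 := two_mul_invLen hinv
      exact ⟨by omega, hinv⟩

theorem mAct_ne_of_lt {τ : Equiv.Perm (Fin n)} (hτ : τ * τ = 1) (i : Fin n) (h : i.val + 1 < n)
    (hlt : τ i < τ ⟨i.val+1,h⟩) : mAct i τ ≠ τ := by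
  rw [mAct_pos i τ h, if_neg (not_lt.2 hlt.le)]
  have hij : (i:ℕ)+1 = ((⟨i.val+1,h⟩ : Fin n):ℕ) := rfl
  set j : Fin n := ⟨i.val+1, h⟩
  have hnij : i ≠ j := (lt_of_hij hij).ne
  by_cases hf : τ i = i ∧ τ j = j
  · rw [if_pos hf]
    intro heq
    have := congrArg (fun g : Equiv.Perm (Fin n) => g i) heq
    simp only [Equiv.Perm.mul_apply, hf.1, Equiv.swap_apply_left] at this
    exact hnij this.symm
  · rw [if_neg hf]
    intro heq
    have heval := congrArg (fun g : Equiv.Perm (Fin n) => g i) heq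
    simp only [Equiv.Perm.mul_apply, Equiv.swap_apply_left] at heval
    -- heval : Equiv.swap i j (τ j) = τ i
    by_cases h1 : τ j = i
    · have hti : τ i = j := by rw [← h1, apply_apply hτ]
      rw [hti, h1] at hlt
      exact absurd hlt (not_lt.2 (lt_of_hij hij).le)
    · by_cases h2 : τ j = j
      · rw [h2, Equiv.swap_apply_right] at heval
        exact hf ⟨heval.symm, h2⟩
      · rw [Equiv.swap_apply_of_ne_of_ne h1 h2] at heval
        exact hnij (τ.injective heval).symm

theorem mAct_eq_of_desc {τ : Equiv.Perm (Fin n)} (i : Fin n) (h : i.val + 1 < n)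
    (hd : τ ⟨i.val+1,h⟩ < τ i) : mAct i τ = τ := by
  rw [mAct_pos i τ h, if_pos hd]

/-- strict chain from local increases -/
theorem chain_mono {f : Fin n → Fin n} (hf : ∀ i : Fin n, (h : i.val + 1 < n) → f i < f ⟨i.val+1,h⟩) :
    StrictMono f := by
  have key : ∀ d : ℕ, ∀ a b : Fin n, (b : ℕ) = (a : ℕ) + d + 1 → f a < f b := by
    intro d
    induction d with
    | zero =>
      intro a b hb
      have h : (a : ℕ) + 1 < n := by omega
      have : b = ⟨a.val + 1, h⟩ := Fin.ext (show (b:ℕ) = (a:ℕ)+1 by omega)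
      rw [this]; exact hf a h
    | succ d ih =>
      intro a b hb
      have h : (a : ℕ) + 1 < n := by have := b.isLt; omega
      exact lt_trans (hf a h) (ih ⟨a.val+1, h⟩ b (show (b:ℕ) = ((a:ℕ)+1) + d + 1 by omega))
  intro a b hab
  exact key ((b : ℕ) - (a : ℕ) - 1) a b (by have := Fin.lt_def.1 hab; omega)

theorem chain_anti {f : Fin n → Fin n} (hf : ∀ i : Fin n, (h : i.val + 1 < n) → f ⟨i.val+1,h⟩ < f i) :
    ∀ a b : Fin n, a < b → f b < f a := by
  have key : ∀ d : ℕ, ∀ a b : Fin n, (b : ℕ) = (a : ℕ) + d + 1 → f b < f a := by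
    intro d
    induction d with
    | zero =>
      intro a b hb
      have h : (a : ℕ) + 1 < n := by omega
      have : b = ⟨a.val + 1, h⟩ := Fin.ext (show (b:ℕ) = (a:ℕ)+1 by omega)
      rw [this]; exact hf a h
    | succ d ih =>
      intro a b hb
      have h : (a : ℕ) + 1 < n := by have := b.isLt; omega
      exact lt_trans (ih ⟨a.val+1, h⟩ b (show (b:ℕ) = ((a:ℕ)+1) + d + 1 by omega)) (hf a h)
  intro a b hab
  exact key ((b : ℕ) - (a : ℕ) - 1) a b (by have := Fin.lt_def.1 hab; omega)

theorem sm_le {f : Fin n → Fin n} (hf : StrictMono f) (k : Fin n) : (k : ℕ) ≤ (f k : ℕ) := by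
  suffices H : ∀ v : ℕ, ∀ k : Fin n, (k : ℕ) = v → v ≤ (f k : ℕ) from H k.val k rfl
  intro v
  induction v with
  | zero => intro k _; omega
  | succ v ih =>
    intro k hk
    have hv : v < n := by have := k.isLt; omega
    have h1 := ih ⟨v, hv⟩ rfl
    have h2 : f ⟨v, hv⟩ < f k := hf (by simp [Fin.lt_def]; omega)
    rw [Fin.lt_def] at h2
    omega

theorem mono_invol_eq_one {τ : Equiv.Perm (Fin n)} (hτ : τ * τ = 1) (hm : StrictMono τ) :
    τ = 1 := by
  ext x
  have h1 := sm_le hm x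
  have h2 := sm_le hm (τ x)
  rw [apply_apply hτ] at h2
  simp only [Equiv.Perm.one_apply]
  omega

theorem anti_invol_eq_w0 {τ : Equiv.Perm (Fin n)} (hτ : τ * τ = 1)
    (hd : ∀ i : Fin n, (h : i.val + 1 < n) → τ ⟨i.val+1,h⟩ < τ i) : τ = w0 n := by
  have hanti := chain_anti hd
  have hg : StrictMono fun k : Fin n => τ (Fin.rev k) := by
    intro a b hab
    exact hanti _ _ (by rw [Fin.rev_lt_rev]; exact hab)
  have hh : StrictMono fun k : Fin n => Fin.rev (τ k) := by
    intro a b hab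
    rw [Fin.rev_lt_rev]
    exact hanti a b hab
  ext x
  have h1 := sm_le hg (Fin.rev x)
  simp only [Fin.rev_rev] at h1
  have h2 := sm_le hh x
  simp only [Fin.val_rev] at h1 h2
  have hx := x.isLt
  have htx := (τ x).isLt
  simp only [w0, Fin.revPerm_apply, Fin.val_rev]
  omega

theorem exists_move {τ : Equiv.Perm (Fin n)} (hτ : τ * τ = 1) (hne : τ ≠ w0 n) :
    ∃ i : Fin n, i.val + 1 < n ∧ mAct i τ ≠ τ := by
  by_contra hcon
  push_neg at hcon
  apply hne
  apply anti_invol_eq_w0 hτ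
  intro i h
  by_contra hlt
  have hlt' : τ i < τ ⟨i.val+1,h⟩ := by
    rcases lt_trichotomy (τ i) (τ ⟨i.val+1,h⟩) with h' | h' | h'
    · exact h'
    · exact absurd (τ.injective h') (fun he => by
        have : i.val = i.val + 1 := congrArg Fin.val he
        omega)
    · exact absurd h' hlt
  exact mAct_ne_of_lt hτ i h hlt' (hcon i h)

theorem invLen_le (τ : Equiv.Perm (Fin n)) : invLen τ ≤ n * n := by
  calc invLen τ ≤ (univ : Finset (Fin n × Fin n)).card := Finset.card_filter_le _ _
  _ = n * n := by simp

theorem reach_up (m : ℕ) : ∀ τ : Equiv.Perm (Fin n), τ * τ = 1 → n * n ≤ invLen τ + m →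
    ∃ L : List (Fin n), (∀ i ∈ L, i.val + 1 < n) ∧ applyM L τ = w0 n := by
  induction m with
  | zero =>
    intro τ hτ hm
    by_cases hw : τ = w0 n
    · exact ⟨[], by simp, by simp [applyM, hw]⟩
    · obtain ⟨i, h, hne⟩ := exists_move hτ hw
      obtain ⟨hstep, _⟩ := mAct_step hτ i h hne
      have := invLen_le (mAct i τ)
      omega
  | succ m ih =>
    intro τ hτ hm
    by_cases hw : τ = w0 n
    · exact ⟨[], by simp, by simp [applyM, hw]⟩
    · obtain ⟨i, h, hne⟩ := exists_move hτ hw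
      obtain ⟨hstep, hinv⟩ := mAct_step hτ i h hne
      obtain ⟨L, hL, happ⟩ := ih (mAct i τ) hinv (by omega)
      refine ⟨L ++ [i], ?_, ?_⟩
      · intro x hx
        rcases List.mem_append.1 hx with hx | hx
        · exact hL x hx
        · rw [List.mem_singleton] at hx; rw [hx]; exact h
      · rw [applyM, List.foldr_append]
        exact happ

theorem descent_pred {τ : Equiv.Perm (Fin n)} (hτ : τ * τ = 1) (i : Fin n) (h : i.val + 1 < n)
    (hd : τ ⟨i.val+1,h⟩ < τ i) :
    ∃ σ : Equiv.Perm (Fin n), σ * σ = 1 ∧ mAct i σ = τ ∧ mAct i σ ≠ σ := by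
  have hij : (i:ℕ)+1 = ((⟨i.val+1,h⟩ : Fin n):ℕ) := rfl
  set j : Fin n := ⟨i.val+1, h⟩ with hjdef
  set s : Equiv.Perm (Fin n) := Equiv.swap i j with hsdef
  have hss : s * s = 1 := Equiv.swap_mul_self i j
  have hnij : i ≠ j := (lt_of_hij hij).ne
  by_cases hij2 : τ i = j
  · -- predecessor is s * τ, which fixes i and j
    have hji : τ j = i := by rw [← hij2, apply_apply hτ]
    have hσi : (s * τ) i = i := by
      simp only [Equiv.Perm.mul_apply, hij2, hsdef, Equiv.swap_apply_right]
    have hσj : (s * τ) j = j := by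
      simp only [Equiv.Perm.mul_apply, hji, hsdef, Equiv.swap_apply_left]
    have hinv : (s * τ) * (s * τ) = 1 := by
      apply inv_swap_mul hτ
      rw [hij2, hji, Equiv.swap_comm]
    have hm : mAct i (s * τ) = τ := by
      rw [mAct_pos i (s * τ) h, if_neg, if_pos ⟨hσi, hσj⟩]
      · rw [← mul_assoc, ← hsdef, hss, one_mul]
      · rw [hσi, hσj]; exact not_lt.2 (lt_of_hij hij).le
    refine ⟨s * τ, hinv, hm, ?_⟩
    rw [hm]
    intro heq
    have : τ i = (s * τ) i := congrArg (fun g : Equiv.Perm (Fin n) => g i) heq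
    rw [hσi, hij2] at this
    exact hnij this.symm
  · -- predecessor is s * τ * s
    have hji2 : τ j ≠ i := fun h' => hij2 (by rw [← h', apply_apply hτ])
    have hinv : (s * τ * s) * (s * τ * s) = 1 := inv_conj hτ hss
    have hσi : (s * τ * s) i = s (τ j) := by
      simp only [Equiv.Perm.mul_apply, hsdef, Equiv.swap_apply_left]
    have hσj : (s * τ * s) j = s (τ i) := by
      simp only [Equiv.Perm.mul_apply, hsdef, Equiv.swap_apply_right]
    have hnd : ¬ (s * τ * s) j < (s * τ * s) i := by
      rw [hσi, hσj, hsdef, swap_lt hij]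
      rintro (⟨h1, _⟩ | ⟨h1, _⟩)
      · exact absurd h1 (not_lt.2 hd.le)
      · exact hij2 h1
    have hnf : ¬ ((s * τ * s) i = i ∧ (s * τ * s) j = j) := by
      rintro ⟨h1, h2⟩
      rw [hσi] at h1; rw [hσj] at h2
      have e1 : τ j = s i := by rw [← apply_apply hss (τ j), h1]
      have e2 : τ i = s j := by rw [← apply_apply hss (τ i), h2]
      rw [hsdef, Equiv.swap_apply_left] at e1
      rw [hsdef, Equiv.swap_apply_right] at e2
      rw [e1, e2] at hd
      exact absurd hd (not_lt.2 (lt_of_hij hij).le)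
    have hm : mAct i (s * τ * s) = τ := by
      rw [mAct_pos i (s * τ * s) h, if_neg hnd, if_neg hnf, ← hsdef]
      calc s * (s * τ * s) * s = (s * s) * τ * (s * s) := by group
      _ = τ := by rw [hss, one_mul, mul_one]
    refine ⟨s * τ * s, hinv, hm, ?_⟩
     
    rw [hm]
    intro heq
    have heval : τ i = (s * τ * s) i := congrArg (fun g : Equiv.Perm (Fin n) => g i) heq
    rw [hσi] at heval
    by_cases h2 : τ j = j
    · rw [h2, hsdef, Equiv.swap_apply_right] at heval
      rw [heval, h2] at hd
      exact absurd hd (not_lt.2 (lt_of_hij hij).le)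
    · rw [hsdef, Equiv.swap_apply_of_ne_of_ne hji2 h2] at heval
      exact hnij (τ.injective heval.symm).symm

theorem reach_down (N : ℕ) : ∀ τ : Equiv.Perm (Fin n), τ * τ = 1 → invLen τ ≤ N →
    ∃ L : List (Fin n), (∀ i ∈ L, i.val + 1 < n) ∧ applyM L 1 = τ := by
  induction N with
  | zero =>
    intro τ hτ hm
    by_cases h1 : τ = 1
    · exact ⟨[], by simp, by simp [applyM, h1]⟩
    · exfalso
      have hdesc : ∃ i : Fin n, ∃ h : i.val + 1 < n, τ ⟨i.val+1,h⟩ < τ i := by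
        by_contra hcon
        push_neg at hcon
        apply h1
        apply mono_invol_eq_one hτ
        apply chain_mono
        intro i h
        rcases lt_trichotomy (τ i) (τ ⟨i.val+1,h⟩) with h' | h' | h'
        · exact h'
        · exact absurd (τ.injective h') (fun he => by
            have : i.val = i.val + 1 := congrArg Fin.val he
            omega)
        · exact absurd h' (not_lt.2 (hcon i h))
      obtain ⟨i, h, hd⟩ := hdesc
      obtain ⟨σ, hσinv, hmeq, hmne⟩ := descent_pred hτ i h hd
      obtain ⟨hstep, _⟩ := mAct_step hσinv i h hmne
      rw [hmeq] at hstep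
      omega
  | succ N ih =>
    intro τ hτ hm
    by_cases h1 : τ = 1
    · exact ⟨[], by simp, by simp [applyM, h1]⟩
    · have hdesc : ∃ i : Fin n, ∃ h : i.val + 1 < n, τ ⟨i.val+1,h⟩ < τ i := by
        by_contra hcon
        push_neg at hcon
        apply h1
        apply mono_invol_eq_one hτ
        apply chain_mono
        intro i h
        rcases lt_trichotomy (τ i) (τ ⟨i.val+1,h⟩) with h' | h' | h'
        · exact h'
        · exact absurd (τ.injective h') (fun he => by
            have : i.val = i.val + 1 := congrArg Fin.val he
            omega)
        · exact absurd h' (not_lt.2 (hcon i h))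
      obtain ⟨i, h, hd⟩ := hdesc
      obtain ⟨σ, hσinv, hmeq, hmne⟩ := descent_pred hτ i h hd
      obtain ⟨hstep, _⟩ := mAct_step hσinv i h hmne
      rw [hmeq] at hstep
      obtain ⟨L, hL, happ⟩ := ih σ hσinv (by omega)
      refine ⟨i :: L, ?_, ?_⟩
      · intro x hx
        rcases List.mem_cons.1 hx with hx | hx
        · rw [hx]; exact h
        · exact hL x hx
      · rw [applyM, List.foldr_cons, ← applyM, happ, hmeq]

end WOI

theorem weak_order_involutions (n : ℕ) (τ : Equiv.Perm (Fin n)) (hτ : τ * τ = 1) :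
    (∃ L : List (Fin n), (∀ i ∈ L, i.val + 1 < n) ∧ applyM L 1 = τ) ∧
      (∃ L : List (Fin n), (∀ i ∈ L, i.val + 1 < n) ∧ applyM L τ = w0 n) ∧
      (τ ≠ w0 n → ∃ i : Fin n, i.val + 1 < n ∧ mAct i τ ≠ τ) ∧
      (∀ i : Fin n, i.val + 1 < n → mAct i τ ≠ τ → invLen (mAct i τ) = invLen τ + 1) := by
  refine ⟨WOI.reach_down (invLen τ) τ hτ le_rfl, WOI.reach_up (n * n) τ hτ (by omega), ?_, ?_⟩
  · exact fun hne => WOI.exists_move hτ hne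
  · exact fun i h hne => (WOI.mAct_step hτ i h hne).1
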